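/- Let M = (Q, A, τ) be a self-invertible Mealy automaton, let a ∈ A, and let Lan(a) = ⋃_{k ≥ 0} { s·aᵏ : s ∈ Q* }. If v₁, v₂ ∈ Lan(a) have the same length, then Deg(v₁) = Deg(v₂), where Deg(v) denotes the number of letters b ∈ A such that vb ∈ Lan(a). -/

import Mathlib

namespace AutGrp

/-- A Mealy automaton with state set `Q` and alphabet `A`:
`step q a = (q · a, q @ a)` (output letter, next state). -/
structure Mealy (Q A : Type*) where
  step : Q → A → A × Q

namespace Mealy

variable {Q A : Type*}

/-- The output letter `q · a`. -/
def o (M : Mealy Q A) (q : Q) (a : A) : A := (M.step q a).1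

/-- The next state `q @ a`. -/
def t (M : Mealy Q A) (q : Q) (a : A) : Q := (M.step q a).2

/-- Action of a single state on a word of letters: `q · w`. -/
def actA (M : Mealy Q A) : Q → List A → List A
  | _, [] => []
  | q, a :: w => M.o q a :: M.actA (M.t q a) w

/-- State reached from `q` after reading the word `w`: `q @ w`. -/
def stA (M : Mealy Q A) : Q → List A → Q
  | q, [] => q
  | q, a :: w => M.stA (M.t q a) w

/-- Action of a word of states on a word of letters: `s · u` (rightmost state acts first). -/
def actW (M : Mealy Q A) : List Q → List A → List A
  | [], u => u
  | q :: s, u => M.actA q (M.actW s u)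

/-- Word of states reached after reading `u`: `s @ u`. -/
def stW (M : Mealy Q A) : List Q → List A → List Q
  | [], _ => []
  | q :: s, u => M.stA q (M.actW s u) :: M.stW s u

/-- `M` is invertible if each state acts on `A` by a bijection. -/
def Invertible (M : Mealy Q A) : Prop := ∀ q : Q, Function.Bijective (M.o q)

/-- `M` is reversible if each letter acts on `Q` by a bijection. -/
def Reversible (M : Mealy Q A) : Prop := ∀ a : A, Function.Bijective (fun q => M.t q a)

theorem actA_append (M : Mealy Q A) (q : Q) (x y : List A) :
    M.actA q (x ++ y) = M.actA q x ++ M.actA (M.stA q x) y := by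
  induction x generalizing q with
  | nil => simp [actA, stA]
  | cons a w ih => simp [actA, stA, ih]

theorem stA_append (M : Mealy Q A) (q : Q) (x y : List A) :
    M.stA q (x ++ y) = M.stA (M.stA q x) y := by
  induction x generalizing q with
  | nil => simp [stA]
  | cons a w ih => simp [stA, ih]

theorem actW_append_states (M : Mealy Q A) (s u : List Q) (w : List A) :
    M.actW (s ++ u) w = M.actW s (M.actW u w) := by
  induction s with
  | nil => simp [actW]
  | cons q s ih => simp [actW, ih]

theorem actW_append (M : Mealy Q A) (s : List Q) (x y : List A) :
    M.actW s (x ++ y) = M.actW s x ++ M.actW (M.stW s x) y := by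
  induction s with
  | nil => simp [actW, stW]
  | cons q s ih => simp [actW, stW, ih, actA_append]

theorem stW_append (M : Mealy Q A) (s : List Q) (x y : List A) :
    M.stW s (x ++ y) = M.stW (M.stW s x) y := by
  induction s with
  | nil => simp [stW]
  | cons q s ih => simp [stW, actW, ih, actW_append, stA_append]

theorem actW_stW_congr (M : Mealy Q A) {p p' : List Q}
    (h : ∀ w : List A, M.actW p w = M.actW p' w) (u w : List A) :
    M.actW (M.stW p u) w = M.actW (M.stW p' u) w := by
  have h1 := M.actW_append p u w
  have h2 := M.actW_append p' u w
  rw [h u, h (u ++ w)] at h1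
  rw [h1] at h2
  exact List.append_cancel_left h2

/-- The congruence `~Q` on the free monoid `Q*`: two words of states are equivalent
iff they act identically on `A*`. -/
def conQ (M : Mealy Q A) : Con (FreeMonoid Q) where
  r s u := ∀ w : List A, M.actW s.toList w = M.actW u.toList w
  iseqv := ⟨fun _ _ => rfl, fun h w => (h w).symm, fun h1 h2 w => (h1 w).trans (h2 w)⟩
  mul' := by
    intro a b c d h1 h2 w
    simp only [FreeMonoid.toList_mul, actW_append_states]
    rw [h2 w, h1 (M.actW d.toList w)]

/-- The congruence `~A` on the free monoid `A*`: `u ~A v` iff `s @ u = s @ v` for all `s ∈ Q*`. -/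
def conA (M : Mealy Q A) : Con (FreeMonoid A) where
  r u v := ∀ s : List Q, M.stW s u.toList = M.stW s v.toList
  iseqv := ⟨fun _ _ => rfl, fun h s => (h s).symm, fun h1 h2 s => (h1 s).trans (h2 s)⟩
  mul' := by
    intro a b c d h1 h2 s
    simp only [FreeMonoid.toList_mul, stW_append]
    rw [h1 s, h2 (M.stW s b.toList)]

/-- The congruence `~D` on the free monoid `A*`: `u ~D v` iff `s @ u ~Q s @ v` for all `s ∈ Q*`. -/
def conD (M : Mealy Q A) : Con (FreeMonoid A) where
  r u v := ∀ (s : List Q) (w : List A),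
    M.actW (M.stW s u.toList) w = M.actW (M.stW s v.toList) w
  iseqv := ⟨fun _ _ _ => rfl, fun h s w => (h s w).symm,
    fun h1 h2 s w => (h1 s w).trans (h2 s w)⟩
  mul' := by
    intro a b c d h1 h2 s w
    simp only [FreeMonoid.toList_mul, stW_append]
    calc M.actW (M.stW (M.stW s a.toList) c.toList) w
        = M.actW (M.stW (M.stW s b.toList) c.toList) w :=
          M.actW_stW_congr (h1 s) c.toList w
      _ = M.actW (M.stW (M.stW s b.toList) d.toList) w := h2 _ w

/-- The automaton semigroup (monoid) `P_M = Q* / ~Q`. -/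
abbrev PM (M : Mealy Q A) : Type _ := M.conQ.Quotient

/-- The dual automaton semigroup (monoid) `D_M = A* / ~A`. -/
abbrev DM (M : Mealy Q A) : Type _ := M.conA.Quotient

/-- The monoid `D'_M = A* / ~D`. -/
abbrev DM' (M : Mealy Q A) : Type _ := M.conD.Quotient

/-- The class in `P_M` of a word of states. -/
def PMmk (M : Mealy Q A) (s : List Q) : M.PM := M.conQ.mk' (FreeMonoid.ofList s)

/-- The class in `D_M` of a word of letters. -/
def DMmk (M : Mealy Q A) (u : List A) : M.DM := M.conA.mk' (FreeMonoid.ofList u)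

/-- The class in `D'_M` of a word of letters. -/
def DM'mk (M : Mealy Q A) (u : List A) : M.DM' := M.conD.mk' (FreeMonoid.ofList u)

/-- `M` is self-invertible if `P_M` is a group. -/
def SelfInvertible (M : Mealy Q A) : Prop :=
  ∀ x : M.PM, ∃ y : M.PM, x * y = 1 ∧ y * x = 1

/-- The enriched automaton of an invertible automaton: states `Q ⊕ Q`, where `Sum.inl q` is `q`
and `Sum.inr q` is the formal inverse `q⁻¹`; `τ̃(q,a) = τ(q,a)` and
`τ̃(q⁻¹, q·a) = (a, (q@a)⁻¹)`. -/
noncomputable def enriched [Nonempty A] (M : Mealy Q A) : Mealy (Q ⊕ Q) A where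
  step := fun p b =>
    match p with
    | Sum.inl q => (M.o q b, Sum.inl (M.t q b))
    | Sum.inr q =>
        (Function.invFun (M.o q) b, Sum.inr (M.t q (Function.invFun (M.o q) b)))

/-- The monoid `Δ_M` presented by generators `Q ⊔ A` and relations `q a = (q·a)(q@a)`. -/
def deltaCon (M : Mealy Q A) : Con (FreeMonoid (Q ⊕ A)) :=
  conGen (fun w₁ w₂ => ∃ (q : Q) (a : A),
    w₁ = FreeMonoid.of (Sum.inl q) * FreeMonoid.of (Sum.inr a) ∧
    w₂ = FreeMonoid.of (Sum.inr (M.o q a)) * FreeMonoid.of (Sum.inl (M.t q a)))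

end Mealy

/-- Evaluation of a positive word in the letters `y` (for `true`) and `z` (for `false`). -/
def evalPair {S : Type*} [Monoid S] (y z : S) : List Bool → S
  | [] => 1
  | b :: l => (bif b then y else z) * evalPair y z l

/-- `y` and `z` freely generate a free subsemigroup of rank two: distinct nonempty
positive words in `y, z` represent distinct elements. -/
def IsFreePair {S : Type*} [Monoid S] (y z : S) : Prop :=
  ∀ l₁ l₂ : List Bool, l₁ ≠ [] → l₂ ≠ [] →
    evalPair y z l₁ = evalPair y z l₂ → l₁ = l₂

/-- `x` has infinite order: `{x, x², x³, …}` is infinite. -/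
def InfiniteOrder {S : Type*} [Monoid S] (x : S) : Prop :=
  (Set.range fun n : ℕ => x ^ (n + 1)).Infinite

/-- The length-`n` prefix of a sequence. -/
def seqTake {A : Type*} (ξ : ℕ → A) (n : ℕ) : List A := (List.range n).map ξ

/-- The `n`-th power `u^n` of a finite word. -/
def wpow {A : Type*} (u : List A) : ℕ → List A
  | 0 => []
  | n + 1 => u ++ wpow u n

/-- The eventually periodic sequence `u v v v ⋯`. -/
noncomputable def prePeriodic {A : Type*} [Nonempty A] (u v : List A) : ℕ → A :=
  fun n => if n < u.length then u.getD n (Classical.arbitrary A)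
    else v.getD ((n - u.length) % v.length) (Classical.arbitrary A)

/-- The periodic sequence `u^ω = u u u ⋯`. -/
noncomputable def periodic {A : Type*} [Nonempty A] (u : List A) : ℕ → A :=
  prePeriodic [] u

namespace Mealy

/-- The action of a word of states on a sequence: `s · ξ` is the sequence whose
length-`n` prefix is `s · (length-`n` prefix of `ξ`)`. -/
noncomputable def actSeq {Q A : Type*} [Nonempty A] (M : Mealy Q A)
    (s : List Q) (ξ : ℕ → A) : ℕ → A :=
  fun n => (M.actW s (seqTake ξ (n + 1))).getD n (Classical.arbitrary A)

/-- The language of all prefixes of the orbit of `a^ω` under `P_M`. -/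
def Lan {Q A : Type*} (M : Mealy Q A) (a : A) : Set (List A) :=
  {v | ∃ (k : ℕ) (s : List Q), v = M.actW s (List.replicate k a)}

/-- The degree of `v` in `Lan(a)`: the number of letters `b` with `v b ∈ Lan(a)`. -/
noncomputable def deg {Q A : Type*} (M : Mealy Q A) (a : A) (v : List A) : ℕ :=
  {b : A | v ++ [b] ∈ M.Lan a}.ncard

end Mealy

/-- A language is regular if it is recognized by a deterministic finite automaton. -/
def IsRegular {A : Type*} (L : Set (List A)) : Prop :=
  ∃ (σ : Type) (_ : Fintype σ) (dfa : DFA A σ), ∀ w : List A, w ∈ dfa.accepts ↔ w ∈ L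


namespace Mealy
variable {Q A : Type*}

theorem stW_append_states (M : Mealy Q A) (s t : List Q) (u : List A) :
    M.stW (s ++ t) u = M.stW s (M.actW t u) ++ M.stW t u := by
  induction s with
  | nil => simp [stW, actW]
  | cons q s ih => simp [stW, actW, ih, actW_append_states]

theorem actA_length (M : Mealy Q A) (q : Q) (u : List A) :
    (M.actA q u).length = u.length := by
  induction u generalizing q with
  | nil => rfl
  | cons a w ih => simp [actA, ih]

theorem actW_length (M : Mealy Q A) (s : List Q) (u : List A) :
    (M.actW s u).length = u.length := by
  induction s with
  | nil => rfl
  | cons q s ih => simp [actW, actA_length, ih]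

/-- In a self-invertible automaton, every state word has an "inverse word". -/
theorem exists_inv (M : Mealy Q A) (hg : M.SelfInvertible) (s : List Q) :
    ∃ w : List Q, (∀ u : List A, M.actW (s ++ w) u = u) ∧
      (∀ u : List A, M.actW (w ++ s) u = u) := by
  obtain ⟨y, hy1, hy2⟩ := hg (M.PMmk s)
  obtain ⟨w', hw'⟩ := Con.mk'_surjective (c := M.conQ) y
  refine ⟨w'.toList, ?_, ?_⟩
  · have h := hy1
    rw [PMmk, ← hw', ← map_mul, ← map_one (M.conQ.mk')] at h
    have hrel : M.conQ (FreeMonoid.ofList s * w') 1 := M.conQ.eq.mp h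
    intro u
    have := hrel u
    simpa [FreeMonoid.toList_mul, FreeMonoid.toList_ofList, actW] using this
  · have h := hy2
    rw [PMmk, ← hw', ← map_mul, ← map_one (M.conQ.mk')] at h
    have hrel : M.conQ (w' * FreeMonoid.ofList s) 1 := M.conQ.eq.mp h
    intro u
    have := hrel u
    simpa [FreeMonoid.toList_mul, FreeMonoid.toList_ofList, actW] using this

theorem deg_le {Q A : Type*} [Fintype A] [Nonempty A]
    (M : Mealy Q A) (hg : M.SelfInvertible) (a : A) (v₁ v₂ : List A)
    (h₁ : v₁ ∈ M.Lan a) (h₂ : v₂ ∈ M.Lan a) (hlen : v₁.length = v₂.length) :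
    M.deg a v₁ ≤ M.deg a v₂ := by
  classical
  obtain ⟨k₁, s₁, hv₁⟩ := h₁
  obtain ⟨k₂, s₂, hv₂⟩ := h₂
  set n := v₁.length with hn
  have hl₁ : v₁.length = k₁ := by
    simpa [actW_length] using congrArg List.length hv₁
  have hl₂ : v₂.length = k₂ := by
    simpa [actW_length] using congrArg List.length hv₂
  have hk₁ : k₁ = n := by omega
  have hk₂ : k₂ = n := by omega
  subst hk₁ hk₂
  -- inverse word of s₁
  obtain ⟨w, -, hws⟩ := M.exists_inv hg s₁
  set r : List Q := M.stW (s₂ ++ w) v₁ with hr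
  obtain ⟨r', -, hr'⟩ := M.exists_inv hg r
  -- the letter map
  have hlen1 : ∀ b : A, (M.actW r [b]).length = 1 := fun b => by
    simp [actW_length]
  set f : A → A := fun b => (M.actW r [b]).getD 0 a with hf
  have hfb : ∀ b : A, M.actW r [b] = [f b] := by
    intro b
    obtain ⟨c, hc⟩ := List.length_eq_one_iff.mp (hlen1 b)
    simp [hf, hc]
  have hinj : Function.Injective f := by
    intro b₁ b₂ h
    have e1 : M.actW (r' ++ r) [b₁] = M.actW (r' ++ r) [b₂] := by
      rw [actW_append_states, actW_append_states, hfb, hfb, h]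
    rw [hr' [b₁], hr' [b₂]] at e1
    exact List.singleton_injective e1
  have hmap : ∀ b : A, v₁ ++ [b] ∈ M.Lan a → v₂ ++ [f b] ∈ M.Lan a := by
    intro b hb
    obtain ⟨k, t, ht⟩ := hb
    have hk : k = n + 1 := by
      have : (v₁ ++ [b]).length = k := by
        simpa [actW_length] using congrArg List.length ht
      simp at this
      omega
    subst hk
    have hrep : List.replicate (n + 1) a = List.replicate n a ++ [a] :=
      List.replicate_succ'
    rw [hrep, M.actW_append] at ht
    have hl : (M.actW t (List.replicate n a)).length = v₁.length := by
      simp [actW_length, hn]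
    have hsplit := List.append_inj ht.symm hl
    refine ⟨n + 1, s₂ ++ w ++ t, ?_⟩
    rw [hrep, M.actW_append]
    have e1 : M.actW (s₂ ++ w ++ t) (List.replicate n a) = v₂ := by
      rw [actW_append_states, hsplit.1, hv₁, ← actW_append_states,
        List.append_assoc, actW_append_states, hws, ← hv₂]
    have e2 : M.stW (s₂ ++ w ++ t) (List.replicate n a) =
        r ++ M.stW t (List.replicate n a) := by
      rw [M.stW_append_states, hsplit.1]
    rw [e1, e2, actW_append_states, hsplit.2, hfb]
  calc M.deg a v₁ = ({b : A | v₁ ++ [b] ∈ M.Lan a}).ncard := rfl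
    _ ≤ ({b : A | v₂ ++ [b] ∈ M.Lan a}).ncard := by
        apply Set.ncard_le_ncard_of_injOn f (fun b hb => hmap b hb)
          (hinj.injOn) (Set.toFinite _)
    _ = M.deg a v₂ := rfl

end Mealy

/-- For a self-invertible Mealy automaton `M` and a letter `a`, two words
of `Lan(a)` of the same length have the same degree in `Lan(a)`. -/
theorem stmt14 {Q A : Type*} [Fintype Q] [Nonempty Q] [Fintype A] [Nonempty A]
    (M : Mealy Q A) (hg : M.SelfInvertible) (a : A) (v₁ v₂ : List A)
    (h₁ : v₁ ∈ M.Lan a) (h₂ : v₂ ∈ M.Lan a) (hlen : v₁.length = v₂.length) :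
    M.deg a v₁ = M.deg a v₂ :=
  le_antisymm (M.deg_le hg a v₁ v₂ h₁ h₂ hlen) (M.deg_le hg a v₂ v₁ h₂ h₁ hlen.symm)

end AutGrp
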